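/- Let β1, β2, L2 be real constants with L2 < 0, β1 < 0, β2 > 0 and Δ = β2² − 4 β1 L2 > 0. Then both roots y1 = (√Δ − β2)/(2 L2) and y2 = −(√Δ + β2)/(2 L2) of L2 y² + β2 y + β1 = 0 are positive with y1 < y2, and g has exactly two positive fixed points √y1 and √y2, with g'(√y1) = 1 + 2 y1 √Δ > 1 (unstable circle) and g'(√y2) = 1 − 2 y2 √Δ < 1 (stable circle). -/

import Mathlib

lemma chenciner_deriv_aux (a b c : ℝ) (x : ℝ) :
    deriv (fun ρ : ℝ => ρ * (1 + a + b * ρ ^ 2 + c * ρ ^ 4)) x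
      = 1 + a + 3 * b * x ^ 2 + 5 * c * x ^ 4 := by
  have hfe : (fun ρ : ℝ => ρ * (1 + a + b * ρ ^ 2 + c * ρ ^ 4))
      = fun ρ : ℝ => (1 + a) * ρ + b * ρ ^ 3 + c * ρ ^ 5 := by
    funext ρ; ring
  rw [hfe]
  have h1 : HasDerivAt (fun ρ : ℝ => (1 + a) * ρ + b * ρ ^ 3 + c * ρ ^ 5)
      ((1 + a) * 1 + b * (3 * x ^ 2) + c * (5 * x ^ 4)) x := by
    have := (((hasDerivAt_id x).const_mul (1 + a)).add
      ((hasDerivAt_pow 3 x).const_mul b)).add ((hasDerivAt_pow 5 x).const_mul c)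
    simpa [Pi.add_def] using this
  rw [h1.deriv]; ring

/-- For the truncated ρ-map `g ρ = ρ (1 + β1 + β2 ρ² + L2 ρ⁴)` with `L2 < 0`,
`β1 < 0`, `β2 > 0` and positive discriminant `Δ = β2² − 4 β1 L2 > 0`: both
roots `y1 = (√Δ − β2)/(2 L2)` and `y2 = −(√Δ + β2)/(2 L2)` of
`L2 y² + β2 y + β1 = 0` are positive with `y1 < y2`, and `g` has exactly two
positive fixed points `√y1` (unstable, `g'(√y1) = 1 + 2 y1 √Δ > 1`) and `√y2`
(stable, `g'(√y2) = 1 − 2 y2 √Δ < 1`). -/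
theorem chenciner_two_circles_neg_L
    (β1 β2 L2 : ℝ) (hL2 : L2 < 0) (hβ1 : β1 < 0) (hβ2 : 0 < β2)
    (hΔ : 0 < β2 ^ 2 - 4 * β1 * L2)
    (g : ℝ → ℝ)
    (hg : ∀ ρ : ℝ, g ρ = ρ * (1 + β1 + β2 * ρ ^ 2 + L2 * ρ ^ 4)) :
    let Δ := β2 ^ 2 - 4 * β1 * L2
    let y1 := (Real.sqrt Δ - β2) / (2 * L2)
    let y2 := -(Real.sqrt Δ + β2) / (2 * L2)
    0 < y1 ∧ 0 < y2 ∧ y1 < y2 ∧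
    L2 * y1 ^ 2 + β2 * y1 + β1 = 0 ∧
    L2 * y2 ^ 2 + β2 * y2 + β1 = 0 ∧
    (∀ ρ : ℝ, 0 < ρ → (g ρ = ρ ↔ ρ = Real.sqrt y1 ∨ ρ = Real.sqrt y2)) ∧
    deriv g (Real.sqrt y1) = 1 + 2 * y1 * Real.sqrt Δ ∧
    1 < 1 + 2 * y1 * Real.sqrt Δ ∧
    deriv g (Real.sqrt y2) = 1 - 2 * y2 * Real.sqrt Δ ∧
    1 - 2 * y2 * Real.sqrt Δ < 1 := by
  intro Δ y1 y2
  have hΔdef : Δ = β2 ^ 2 - 4 * β1 * L2 := rfl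
  set s := Real.sqrt Δ with hsdef
  have hs2 : s ^ 2 = Δ := Real.sq_sqrt (le_of_lt hΔ)
  have hs0 : 0 < s := Real.sqrt_pos.mpr hΔ
  have hy1 : y1 = (s - β2) / (2 * L2) := rfl
  have hy2 : y2 = -(s + β2) / (2 * L2) := rfl
  clear_value y1 y2
  clear_value s
  clear_value Δ
  have hsΔ : s ^ 2 = β2 ^ 2 - 4 * β1 * L2 := by rw [hs2, hΔdef]
  have hL2ne : L2 ≠ 0 := ne_of_lt hL2
  have h2L2ne : (2 : ℝ) * L2 ≠ 0 := by positivity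
  have hsβ : s < β2 := by nlinarith [hsΔ]
  have hy1pos : 0 < y1 := by
    rw [hy1]; exact div_pos_of_neg_of_neg (by linarith) (by linarith)
  have hy2pos : 0 < y2 := by
    rw [hy2]; exact div_pos_of_neg_of_neg (by linarith) (by linarith)
  have hlt : y1 < y2 := by
    rw [hy1, hy2, div_lt_div_right_of_neg (by linarith : 2 * L2 < 0)]
    linarith
  have hb1 : 2 * L2 * y1 = s - β2 := by
    rw [hy1]; field_simp
  have hb2 : 2 * L2 * y2 = -(s + β2) := by
    rw [hy2]; field_simp
  have h4L2 : (4 : ℝ) * L2 ≠ 0 := by positivity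
  have hroot1 : L2 * y1 ^ 2 + β2 * y1 + β1 = 0 := by
    have h : 4 * L2 * (L2 * y1 ^ 2 + β2 * y1 + β1) = 0 := by
      linear_combination (2 * L2 * y1 + s + β2) * hb1 + hsΔ
    exact (mul_eq_zero.mp h).resolve_left h4L2
  have hroot2 : L2 * y2 ^ 2 + β2 * y2 + β1 = 0 := by
    have h : 4 * L2 * (L2 * y2 ^ 2 + β2 * y2 + β1) = 0 := by
      linear_combination (2 * L2 * y2 - s + β2) * hb2 + hsΔ
    exact (mul_eq_zero.mp h).resolve_left h4L2
  have hA : 2 * L2 * (y1 + y2) = -2 * β2 := by linear_combination hb1 + hb2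
  have hB : 4 * L2 ^ 2 * (y1 * y2) = 4 * β1 * L2 := by
    linear_combination (2 * L2 * y2) * hb1 + (s - β2) * hb2 - hsΔ
  have hfact : ∀ t : ℝ, β1 + β2 * t + L2 * t ^ 2 = L2 * (t - y1) * (t - y2) := by
    intro t
    have h : 4 * L2 * (β1 + β2 * t + L2 * t ^ 2)
        = 4 * L2 * (L2 * (t - y1) * (t - y2)) := by
      linear_combination (2 * L2 * t) * hA - hB
    exact mul_left_cancel₀ h4L2 h
  have hsq1 : Real.sqrt y1 ^ 2 = y1 := Real.sq_sqrt hy1pos.le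
  have hsq2 : Real.sqrt y2 ^ 2 = y2 := Real.sq_sqrt hy2pos.le
  have hgfun : g = fun ρ : ℝ => ρ * (1 + β1 + β2 * ρ ^ 2 + L2 * ρ ^ 4) := funext hg
  refine ⟨hy1pos, hy2pos, hlt, hroot1, hroot2, ?_, ?_, ?_, ?_, ?_⟩
  · intro ρ hρ
    rw [hg ρ]
    constructor
    · intro h
      have h' : ρ * (β1 + β2 * ρ ^ 2 + L2 * (ρ ^ 2) ^ 2) = 0 := by
        linear_combination h
      have h2 : β1 + β2 * ρ ^ 2 + L2 * (ρ ^ 2) ^ 2 = 0 :=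
        (mul_eq_zero.mp h').resolve_left (ne_of_gt hρ)
      rw [hfact (ρ ^ 2)] at h2
      rcases mul_eq_zero.mp h2 with h3 | h3
      · rcases mul_eq_zero.mp h3 with h4 | h4
        · exact absurd h4 hL2ne
        · left
          have hq : ρ ^ 2 = y1 := by linarith
          rw [← hq, Real.sqrt_sq hρ.le]
      · right
        have hq : ρ ^ 2 = y2 := by linarith
        rw [← hq, Real.sqrt_sq hρ.le]
    · rintro (h | h) <;> subst h
      · linear_combination Real.sqrt y1 * hroot1 +
          Real.sqrt y1 * (β2 + L2 * (Real.sqrt y1 ^ 2 + y1)) * hsq1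
      · linear_combination Real.sqrt y2 * hroot2 +
          Real.sqrt y2 * (β2 + L2 * (Real.sqrt y2 ^ 2 + y2)) * hsq2
  · rw [hgfun, chenciner_deriv_aux]
    have h4 : Real.sqrt y1 ^ 4 = y1 ^ 2 := by
      rw [show (4:ℕ) = 2*2 from rfl, pow_mul, hsq1]
    rw [h4, hsq1]
    linear_combination hroot1 + 2 * y1 * hb1
  · nlinarith [hy1pos, hs0]
  · rw [hgfun, chenciner_deriv_aux]
    have h4 : Real.sqrt y2 ^ 4 = y2 ^ 2 := by
      rw [show (4:ℕ) = 2*2 from rfl, pow_mul, hsq2]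
    rw [h4, hsq2]
    linear_combination hroot2 + 2 * y2 * hb2
  · nlinarith [hy2pos, hs0]
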